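/- arXiv:0707.2411 — 3 statements merged into one kernel-verified Lean document; each statement's English description precedes it below -/
import Mathlib

section
/- Let m ≥ 2 and let A be a real m×m symmetric matrix with a_{ij} ≥ 0 for all i ≠ j, zero row sums (Σ_{j=1}^m a_{ij} = 0 for every i), and irreducible (for every pair of indices i ≠ j there is a finite chain i = i₀, i₁, …, i_k = j with a_{i_l i_{l+1}} ≠ 0). Then for every ε > 0 the matrix Ã obtained from A by replacing the (1,1) entry a_{11} with a_{11} − ε is negative definite, i.e., vᵀÃv < 0 for every nonzero v ∈ ℝᵐ (equivalently, all eigenvalues of Ã are negative). -/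
open Matrix BigOperators

/-- Proposition 1: pinning an irreducible symmetric zero-row-sum matrix with
nonnegative off-diagonal entries makes it negative definite. -/
theorem stmt_0 (m : ℕ) (hm : 2 ≤ m) (A : Matrix (Fin m) (Fin m) ℝ)
    (hsym : A.IsSymm)
    (hoff : ∀ i j : Fin m, i ≠ j → 0 ≤ A i j)
    (hrow : ∀ i : Fin m, ∑ j, A i j = 0)
    (hirr : ∀ i j : Fin m, i ≠ j → Relation.TransGen (fun p q => A p q ≠ 0) i j)
    (ε : ℝ) (hε : 0 < ε)
    (Atil : Matrix (Fin m) (Fin m) ℝ)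
    (hAtil : ∀ i j : Fin m, Atil i j =
      if i = (⟨0, by omega⟩ : Fin m) ∧ j = (⟨0, by omega⟩ : Fin m) then A i j - ε else A i j)
    (v : Fin m → ℝ) (hv : v ≠ 0) :
    v ⬝ᵥ Atil *ᵥ v < 0 := by
  set z : Fin m := ⟨0, by omega⟩ with hzdef
  have hs : ∀ i j, A i j = A j i := fun i j => hsym.apply j i
  -- step 1: quadratic form of Atil
  have hQ : v ⬝ᵥ Atil *ᵥ v
      = (∑ i, ∑ j, A i j * (v i * v j)) - ε * (v z * v z) := by
    have h1 : v ⬝ᵥ Atil *ᵥ v = ∑ i, ∑ j, Atil i j * (v i * v j) := by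
      simp only [dotProduct, mulVec]
      refine Finset.sum_congr rfl fun i _ => ?_
      rw [Finset.mul_sum]
      refine Finset.sum_congr rfl fun j _ => ?_
      ring
    rw [h1]
    have h2 : ∀ i j : Fin m, Atil i j * (v i * v j)
        = A i j * (v i * v j) - (if i = z ∧ j = z then ε * (v z * v z) else 0) := by
      intro i j
      rw [hAtil]
      by_cases h : i = z ∧ j = z
      · obtain ⟨h1, h2⟩ := h
        subst h1; subst h2
        simp; ring
      · simp [h]
    simp only [h2]
    simp only [Finset.sum_sub_distrib]
    congr 1
    simp [ite_and, Finset.sum_ite_eq']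
  -- step 2: standard identity
  have hid : ∑ i, ∑ j, A i j * (v i * v j)
      = -(1/2) * ∑ i, ∑ j, A i j * (v i - v j)^2 := by
    have hA1 : ∀ i : Fin m, ∑ j, A i j * (v i)^2 = 0 := by
      intro i
      rw [← Finset.sum_mul, hrow, zero_mul]
    have hA2 : ∑ i, ∑ j, A i j * (v j)^2 = 0 := by
      rw [Finset.sum_comm]
      refine Finset.sum_eq_zero fun j _ => ?_
      have : ∀ i : Fin m, A i j * (v j)^2 = A j i * (v j)^2 := fun i => by rw [hs]
      simp only [this]
      rw [← Finset.sum_mul, hrow, zero_mul]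
    have hexp : ∀ i j : Fin m, A i j * (v i - v j)^2
        = A i j * (v i)^2 - 2 * (A i j * (v i * v j)) + A i j * (v j)^2 := by
      intro i j; ring
    simp only [hexp]
    simp only [Finset.sum_add_distrib, Finset.sum_sub_distrib, ← Finset.mul_sum]
    rw [Finset.sum_congr rfl (fun i _ => hA1 i), hA2]
    simp [Finset.mul_sum]
  have hnonneg : ∀ i j : Fin m, 0 ≤ A i j * (v i - v j)^2 := by
    intro i j
    rcases eq_or_ne i j with rfl | h
    · simp
    · exact mul_nonneg (hoff i j h) (sq_nonneg _)
  set S : ℝ := ∑ i, ∑ j, A i j * (v i - v j)^2 with hSdef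
  have hS0 : 0 ≤ S :=
    Finset.sum_nonneg fun i _ => Finset.sum_nonneg fun j _ => hnonneg i j
  rw [hQ, hid]
  -- suffices strict positivity of S/2 + ε (v z)^2
  have hpos : 0 < (1/2) * S + ε * (v z * v z) := by
    by_contra hcon
    push_neg at hcon
    have hvz2 : 0 ≤ ε * (v z * v z) := mul_nonneg hε.le (mul_self_nonneg _)
    have hSz : S = 0 := le_antisymm (by nlinarith) hS0
    have hvz : v z = 0 := by
      have h0 : v z * v z = 0 := by nlinarith
      exact mul_self_eq_zero.mp h0
    -- each term vanishes
    have hterm : ∀ i j : Fin m, A i j * (v i - v j)^2 = 0 := by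
      have hin : ∀ i ∈ Finset.univ, ∑ j, A i j * (v i - v j)^2 = 0 := by
        rw [← Finset.sum_eq_zero_iff_of_nonneg
          (fun i _ => Finset.sum_nonneg fun j _ => hnonneg i j)]
        exact hSz.symm ▸ rfl
      intro i j
      have := (Finset.sum_eq_zero_iff_of_nonneg (fun j _ => hnonneg i j)).mp
        (hin i (Finset.mem_univ i)) j (Finset.mem_univ j)
      exact this
    have hrel : ∀ p q : Fin m, A p q ≠ 0 → v p = v q := by
      intro p q hpq
      have := hterm p q
      have h2 : (v p - v q)^2 = 0 := by
        rcases mul_eq_zero.mp this with h | h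
        · exact absurd h hpq
        · exact h
      have := pow_eq_zero_iff (n := 2) (by norm_num) |>.mp h2
      linarith
    have htrans : ∀ p q : Fin m, Relation.TransGen (fun p q => A p q ≠ 0) p q → v p = v q := by
      intro p q h
      induction h with
      | single h => exact hrel _ _ h
      | tail _ h ih => exact ih.trans (hrel _ _ h)
    have : v = 0 := by
      funext i
      rcases eq_or_ne i z with rfl | hiz
      · exact hvz
      · rw [htrans i z (hirr i z hiz), hvz]; rfl
    exact hv this
  nlinarith
end

section
/- Let m ≥ 2, n ≥ 1, let A be a real m×m symmetric matrix with a_{ij} ≥ 0 for i ≠ j, zero row sums, and irreducible; let ε > 0 and c > 0, and let λ₁ < 0 be the largest eigenvalue of the pinned matrix Ã (entry ã_{11} = a_{11} − ε, ã_{ij} = a_{ij} otherwise). Suppose f : ℝⁿ × [0,∞) → ℝⁿ satisfies condition (11) with positive diagonal matrices P = diag(p₁,…,p_n), Δ = diag(Δ₁,…,Δ_n) and constant η > 0, and that Δ_k + cλ₁ < 0 for every k = 1,…,n. Let s : [0,∞) → ℝⁿ satisfy s'(t) = f(s(t),t), and let x₁,…,x_m : [0,∞) → ℝⁿ satisfy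 the controlled network equations x₁'(t) = f(x₁(t),t) + c·Σ_{j=1}^m a_{1j} x_j(t) − cε(x₁(t) − s(t)) and x_i'(t) = f(x_i(t),t) + c·Σ_{j=1}^m a_{ij} x_j(t) for i = 2,…,m. Then for all t ≥ 0, Σ_{i=1}^m (x_i(t) − s(t))ᵀ P (x_i(t) − s(t)) ≤ e^{−(2η/max_k p_k)·t} · Σ_{i=1}^m (x_i(0) − s(0))ᵀ P (x_i(0) − s(0)); in particular every x_i converges to s exponentially. -/
open Matrix BigOperators

lemma quad_le' {m : ℕ} (M : Matrix (Fin m) (Fin m) ℝ) (hM : M.IsHermitian) (lam : ℝ)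
    (hmax : ∀ μ : ℝ, Module.End.HasEigenvalue M.mulVecLin μ → μ ≤ lam)
    (v : Fin m → ℝ) : v ⬝ᵥ M.mulVec v ≤ lam * (v ⬝ᵥ v) := by
  classical
  have heig : ∀ j, hM.eigenvalues j ≤ lam := by
    intro j
    apply hmax
    apply Module.End.hasEigenvalue_of_hasEigenvector (x := ⇑(hM.eigenvectorBasis j))
    constructor
    · rw [Module.End.mem_eigenspace_iff, mulVecLin_apply, hM.mulVec_eigenvectorBasis]
    · intro h
      have := hM.eigenvectorBasis.orthonormal.1 j
      rw [show (hM.eigenvectorBasis j) = 0 from by simpa using congrArg (WithLp.toLp 2) h] at this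
      simp at this
  set U : Matrix (Fin m) (Fin m) ℝ := (hM.eigenvectorUnitary : Matrix (Fin m) (Fin m) ℝ) with hU
  have hUU : U * star U = 1 := Unitary.coe_mul_star_self hM.eigenvectorUnitary
  set w : Fin m → ℝ := (star U).mulVec v with hw
  have hvU : v ᵥ* U = w := by
    rw [hw, show star U = Uᵀ from rfl, mulVec_transpose]
  have h1 : v ⬝ᵥ M.mulVec v = ∑ j, hM.eigenvalues j * (w j)^2 := by
    conv_lhs => rw [hM.spectral_theorem]
    rw [Unitary.conjStarAlgAut_apply]
    rw [← mulVec_mulVec, ← mulVec_mulVec, dotProduct_mulVec v, hvU, ← hw]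
    simp only [dotProduct, mulVec_diagonal, Function.comp_apply, RCLike.ofReal_real_eq_id, id]
    exact Finset.sum_congr rfl fun j _ => by ring
  have h2 : v ⬝ᵥ v = ∑ j, (w j)^2 := by
    have : w ⬝ᵥ w = v ⬝ᵥ v := by
      rw [hw, dotProduct_mulVec, ← mulVec_transpose,
        show (star U)ᵀ = U from by rw [show star U = Uᵀ from rfl, transpose_transpose],
        mulVec_mulVec, hUU, one_mulVec]
    rw [← this]
    simp [dotProduct, sq]
  rw [h1, h2, Finset.mul_sum]
  apply Finset.sum_le_sum
  intro j _
  exact mul_le_mul_of_nonneg_right (heig j) (sq_nonneg _)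

/-- Theorem 2: global exponential pinning of a linearly coupled network with an
irreducible symmetric coupling matrix via a single controller. -/
theorem stmt_5 (m n : ℕ) (hm : 2 ≤ m) (hn : 1 ≤ n)
    (A : Matrix (Fin m) (Fin m) ℝ) (hsym : A.IsSymm)
    (hoff : ∀ i j : Fin m, i ≠ j → 0 ≤ A i j)
    (hrow : ∀ i : Fin m, ∑ j, A i j = 0)
    (hirr : ∀ i j : Fin m, i ≠ j → Relation.TransGen (fun p q => A p q ≠ 0) i j)
    (ε c : ℝ) (hε : 0 < ε) (hc : 0 < c)
    (Atil : Matrix (Fin m) (Fin m) ℝ)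
    (hAtil : ∀ i j : Fin m, Atil i j =
      if i = (⟨0, by omega⟩ : Fin m) ∧ j = (⟨0, by omega⟩ : Fin m) then A i j - ε else A i j)
    (lam1 : ℝ) (hlam1 : lam1 < 0)
    (hlam1eig : Module.End.HasEigenvalue (Matrix.mulVecLin Atil) lam1)
    (hlam1max : ∀ μ : ℝ, Module.End.HasEigenvalue (Matrix.mulVecLin Atil) μ → μ ≤ lam1)
    (p Δ : Fin n → ℝ) (hp : ∀ k, 0 < p k) (hΔ : ∀ k, 0 < Δ k)
    (η : ℝ) (hη : 0 < η)
    (f : (Fin n → ℝ) → ℝ → (Fin n → ℝ))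
    (hcond : ∀ t : ℝ, 0 ≤ t → ∀ x y : Fin n → ℝ,
      (x - y) ⬝ᵥ (fun k => p k * (f x t k - Δ k * x k - f y t k + Δ k * y k))
        ≤ -η * ((x - y) ⬝ᵥ (x - y)))
    (hΔc : ∀ k : Fin n, Δ k + c * lam1 < 0)
    (s : ℝ → Fin n → ℝ) (hs : ∀ t : ℝ, 0 ≤ t → HasDerivAt s (f (s t) t) t)
    (x : Fin m → ℝ → Fin n → ℝ)
    (hx1 : ∀ t : ℝ, 0 ≤ t → HasDerivAt (x ⟨0, by omega⟩)
      (f (x ⟨0, by omega⟩ t) t + c • (∑ j, A ⟨0, by omega⟩ j • x j t)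
        - (c * ε) • (x ⟨0, by omega⟩ t - s t)) t)
    (hxi : ∀ i : Fin m, i ≠ (⟨0, by omega⟩ : Fin m) → ∀ t : ℝ, 0 ≤ t →
      HasDerivAt (x i) (f (x i t) t + c • (∑ j, A i j • x j t)) t)
    (pmax : ℝ) (hpmax : IsGreatest (Set.range p) pmax)
    (t : ℝ) (ht : 0 ≤ t) :
    ∑ i : Fin m, (x i t - s t) ⬝ᵥ (fun k => p k * (x i t - s t) k)
      ≤ Real.exp (-(2 * η / pmax) * t) *
        ∑ i : Fin m, (x i 0 - s 0) ⬝ᵥ (fun k => p k * (x i 0 - s 0) k) := by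
  classical
  set i0 : Fin m := ⟨0, by omega⟩ with hi0
  -- pmax positive
  obtain ⟨k0, hk0⟩ := hpmax.1
  have hpmaxpos : 0 < pmax := hk0 ▸ hp k0
  have hple : ∀ k, p k ≤ pmax := fun k => hpmax.2 ⟨k, rfl⟩
  -- Atil is Hermitian
  have hAtilHerm : Atil.IsHermitian := by
    ext i j
    simp only [conjTranspose_apply, star_trivial]
    rw [hAtil j i, hAtil i j]
    have hAij : A j i = A i j := congrFun (congrFun hsym i) j
    by_cases h : i = i0 ∧ j = i0
    · simp [h.1, h.2]
    · have h' : ¬ (j = i0 ∧ i = i0) := fun hh => h ⟨hh.2, hh.1⟩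
      simp [h, h', hAij]
  -- the error functions and their derivatives
  set e : Fin m → ℝ → Fin n → ℝ := fun i t => x i t - s t with he
  set F : Fin m → ℝ → Fin n → ℝ :=
    fun i t => f (x i t) t - f (s t) t + c • ∑ j, Atil i j • e j t with hF
  have hederiv : ∀ i : Fin m, ∀ t : ℝ, 0 ≤ t → HasDerivAt (e i) (F i t) t := by
    intro i t ht
    by_cases hi : i = i0
    · subst hi
      have h1 := (hx1 t ht).sub (hs t ht)
      refine h1.congr_deriv ?_
      symm
      funext k
      simp only [hF, he, Pi.add_apply, Pi.sub_apply, Pi.smul_apply, smul_eq_mul,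
        Finset.sum_apply]
      have hsum : ∑ j, Atil i0 j * (x j t k - s t k)
          = (∑ j, A i0 j * x j t k) - ε * (x i0 t k - s t k) := by
        have h2 : ∀ j, Atil i0 j = A i0 j - (if j = i0 then ε else 0) := by
          intro j
          rw [hAtil i0 j]
          by_cases hj : j = i0 <;> simp [hj]
        have h3 : ∑ j, Atil i0 j * (x j t k - s t k)
            = ∑ j, (A i0 j * (x j t k - s t k)
              - (if j = i0 then ε else 0) * (x j t k - s t k)) := by
          refine Finset.sum_congr rfl fun j _ => ?_
          rw [h2 j]; ring
        rw [h3, Finset.sum_sub_distrib]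
        have h4 : ∑ j, (if j = i0 then ε else 0) * (x j t k - s t k)
            = ε * (x i0 t k - s t k) := by
          rw [Finset.sum_eq_single i0]
          · simp
          · intro j _ hj; simp [hj]
          · simp
        rw [h4]
        have h5 : ∑ j, A i0 j * (x j t k - s t k)
            = ∑ j, A i0 j * x j t k - (∑ j, A i0 j) * s t k := by
          rw [Finset.sum_mul, ← Finset.sum_sub_distrib]
          exact Finset.sum_congr rfl fun j _ => by ring
        rw [h5, hrow i0]
        ring
      rw [hsum]
      ring
    · have h1 := (hxi i hi t ht).sub (hs t ht)
      refine h1.congr_deriv ?_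
      symm
      funext k
      simp only [hF, he, Pi.add_apply, Pi.sub_apply, Pi.smul_apply, smul_eq_mul,
        Finset.sum_apply]
      have hsum : ∑ j, Atil i j * (x j t k - s t k) = ∑ j, A i j * x j t k := by
        have h2 : ∀ j, Atil i j = A i j := by
          intro j
          rw [hAtil i j]
          simp [hi]
        have h5 : ∑ j, A i j * (x j t k - s t k)
            = ∑ j, A i j * x j t k - (∑ j, A i j) * s t k := by
          rw [Finset.sum_mul, ← Finset.sum_sub_distrib]
          exact Finset.sum_congr rfl fun j _ => by ring
        simp_rw [h2]
        rw [h5, hrow i]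
        ring
      rw [hsum]
      ring
  -- the Lyapunov function
  set V : ℝ → ℝ := fun t => ∑ i : Fin m, ∑ k, p k * (e i t k * e i t k) with hV
  set D : ℝ → ℝ := fun t =>
    ∑ i : Fin m, ∑ k, p k * (F i t k * e i t k + e i t k * F i t k) with hD
  have hVderiv : ∀ t : ℝ, 0 ≤ t → HasDerivAt V (D t) t := by
    intro t ht
    apply HasDerivAt.fun_sum
    intro i _
    apply HasDerivAt.fun_sum
    intro k _
    have hcomp : HasDerivAt (fun t => e i t k) (F i t k) t :=
      hasDerivAt_pi.1 (hederiv i t ht) k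
    exact (hcomp.mul hcomp).const_mul (p k)
  -- the key differential inequality
  have hkey : ∀ t : ℝ, 0 ≤ t → D t ≤ -(2 * η / pmax) * V t := by
    intro t ht
    set S : ℝ := ∑ i : Fin m, ∑ k, e i t k * e i t k with hS
    set W : ℝ := ∑ i : Fin m, ∑ k, p k * Δ k * (e i t k * e i t k) with hW
    have hcondbound : ∀ i : Fin m,
        ∑ k, e i t k * (p k * (f (x i t) t k - f (s t) t k))
          ≤ -η * (∑ k, e i t k * e i t k) + ∑ k, p k * Δ k * (e i t k * e i t k) := by
      intro i
      have h := hcond t ht (x i t) (s t)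
      simp only [dotProduct, Pi.sub_apply] at h
      have hL : ∑ k, (x i t k - s t k) *
            (p k * (f (x i t) t k - Δ k * x i t k - f (s t) t k + Δ k * s t k))
          = ∑ k, e i t k * (p k * (f (x i t) t k - f (s t) t k))
            - ∑ k, p k * Δ k * (e i t k * e i t k) := by
        rw [← Finset.sum_sub_distrib]
        refine Finset.sum_congr rfl fun k _ => ?_
        simp only [he, Pi.sub_apply]
        ring
      have hR : ∑ k, (x i t k - s t k) * (x i t k - s t k)
          = ∑ k, e i t k * e i t k :=
        Finset.sum_congr rfl fun k _ => by simp [he]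
      rw [hL, hR] at h
      linarith
    have hcoupling : ∀ k : Fin n,
        ∑ i, e i t k * ∑ j, Atil i j * e j t k
          ≤ lam1 * ∑ i, e i t k * e i t k := by
      intro k
      have := quad_le' Atil hAtilHerm lam1 hlam1max (fun i => e i t k)
      simpa only [dotProduct, mulVec] using this
    have hFk : ∀ i k, F i t k
        = f (x i t) t k - f (s t) t k + c * ∑ j, Atil i j * e j t k := by
      intro i k
      simp [hF, Finset.sum_apply, Pi.smul_apply, smul_eq_mul]
    have hDsplit : D t
        = 2 * (∑ i : Fin m, ∑ k, e i t k * (p k * (f (x i t) t k - f (s t) t k)))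
          + 2 * c * ∑ k, p k * (∑ i, e i t k * ∑ j, Atil i j * e j t k) := by
      have hterm : ∀ i k, p k * (F i t k * e i t k + e i t k * F i t k)
          = 2 * (e i t k * (p k * (f (x i t) t k - f (s t) t k)))
            + 2 * c * (p k * (e i t k * ∑ j, Atil i j * e j t k)) := by
        intro i k
        rw [hFk i k]
        ring
      calc D t = ∑ i : Fin m, ∑ k,
            (2 * (e i t k * (p k * (f (x i t) t k - f (s t) t k)))
              + 2 * c * (p k * (e i t k * ∑ j, Atil i j * e j t k))) := by
            exact Finset.sum_congr rfl fun i _ => Finset.sum_congr rfl fun k _ => hterm i k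
        _ = (∑ i : Fin m, ∑ k, 2 * (e i t k * (p k * (f (x i t) t k - f (s t) t k))))
              + ∑ i : Fin m, ∑ k, 2 * c * (p k * (e i t k * ∑ j, Atil i j * e j t k)) := by
            rw [← Finset.sum_add_distrib]
            exact Finset.sum_congr rfl fun i _ => Finset.sum_add_distrib
        _ = 2 * (∑ i : Fin m, ∑ k, e i t k * (p k * (f (x i t) t k - f (s t) t k)))
              + 2 * c * ∑ k, p k * (∑ i, e i t k * ∑ j, Atil i j * e j t k) := by
            have hx : (∑ i : Fin m, ∑ k, 2 * (e i t k * (p k * (f (x i t) t k - f (s t) t k))))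
                = 2 * (∑ i : Fin m, ∑ k, e i t k * (p k * (f (x i t) t k - f (s t) t k))) := by
              simp only [Finset.mul_sum]
            have hy : (∑ i : Fin m, ∑ k, 2 * c * (p k * (e i t k * ∑ j, Atil i j * e j t k)))
                = 2 * c * ∑ k, p k * (∑ i, e i t k * ∑ j, Atil i j * e j t k) := by
              rw [Finset.sum_comm]
              simp only [Finset.mul_sum]
            rw [hx, hy]
    have hS1 : (∑ i : Fin m, ∑ k, e i t k * (p k * (f (x i t) t k - f (s t) t k)))
        ≤ -η * S + W := by
      calc (∑ i : Fin m, ∑ k, e i t k * (p k * (f (x i t) t k - f (s t) t k)))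
          ≤ ∑ i : Fin m, (-η * (∑ k, e i t k * e i t k)
              + ∑ k, p k * Δ k * (e i t k * e i t k)) :=
            Finset.sum_le_sum fun i _ => hcondbound i
        _ = -η * S + W := by
            rw [Finset.sum_add_distrib, hS, hW, Finset.mul_sum]
    have hS2 : (∑ k, p k * (∑ i, e i t k * ∑ j, Atil i j * e j t k)) ≤ lam1 * V t := by
      calc (∑ k, p k * (∑ i, e i t k * ∑ j, Atil i j * e j t k))
          ≤ ∑ k, p k * (lam1 * ∑ i, e i t k * e i t k) :=
            Finset.sum_le_sum fun k _ =>
              mul_le_mul_of_nonneg_left (hcoupling k) (hp k).le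
        _ = lam1 * V t := by
            have hVt' : V t = ∑ k, ∑ i, p k * (e i t k * e i t k) := Finset.sum_comm
            rw [hVt']
            simp only [Finset.mul_sum]
            exact Finset.sum_congr rfl fun k _ =>
              Finset.sum_congr rfl fun i _ => by ring
    have hWV : W ≤ -(c * lam1) * V t := by
      rw [hW, hV, Finset.mul_sum]
      refine Finset.sum_le_sum fun i _ => ?_
      rw [Finset.mul_sum]
      refine Finset.sum_le_sum fun k _ => ?_
      have h1 : Δ k ≤ -(c * lam1) := by linarith [hΔc k]
      have h2 : 0 ≤ p k * (e i t k * e i t k) := mul_nonneg (hp k).le (mul_self_nonneg _)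
      nlinarith [h2, h1, hp k, mul_self_nonneg (e i t k)]
    have hVS : V t ≤ pmax * S := by
      rw [hV, hS, Finset.mul_sum]
      refine Finset.sum_le_sum fun i _ => ?_
      rw [Finset.mul_sum]
      exact Finset.sum_le_sum fun k _ =>
        mul_le_mul_of_nonneg_right (hple k) (mul_self_nonneg _)
    have hDle : D t ≤ -(2 * η) * S := by
      rw [hDsplit]
      have h2 := mul_le_mul_of_nonneg_left hS2 (by positivity : (0:ℝ) ≤ 2 * c)
      have h1 := mul_le_mul_of_nonneg_left hS1 (by norm_num : (0:ℝ) ≤ 2)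
      nlinarith [h1, h2, hWV, hc]
    have hKnn : 0 ≤ 2 * η / pmax := by positivity
    have hA1 : (2 * η / pmax) * V t ≤ 2 * η * S := by
      calc (2 * η / pmax) * V t ≤ (2 * η / pmax) * (pmax * S) :=
            mul_le_mul_of_nonneg_left hVS hKnn
        _ = 2 * η * S := by field_simp
    linarith [hDle, hA1]
  -- Gronwall argument
  set K : ℝ := 2 * η / pmax with hK
  have hKpos : 0 < K := by positivity
  set g : ℝ → ℝ := fun t => Real.exp (K * t) * V t with hg
  have hgderiv : ∀ u : ℝ, 0 ≤ u →
      HasDerivAt g (K * Real.exp (K * u) * V u + Real.exp (K * u) * D u) u := by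
    intro u hu
    have hlin : HasDerivAt (fun u : ℝ => K * u) K u := by
      simpa using (hasDerivAt_id u).const_mul K
    have hexp : HasDerivAt (fun u => Real.exp (K * u)) (Real.exp (K * u) * K) u := hlin.exp
    have := hexp.mul (hVderiv u hu)
    refine this.congr_deriv ?_
    ring
  have hganti : AntitoneOn g (Set.Ici (0:ℝ)) := by
    apply antitoneOn_of_deriv_nonpos (convex_Ici 0)
    · intro u hu
      exact ((hgderiv u hu).continuousAt).continuousWithinAt
    · intro u hu
      rw [interior_Ici] at hu
      exact ((hgderiv u (le_of_lt hu)).differentiableAt).differentiableWithinAt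
    · intro u hu
      rw [interior_Ici] at hu
      rw [(hgderiv u (le_of_lt hu)).deriv]
      have h1 := hkey u (le_of_lt hu)
      have h2 : (0:ℝ) < Real.exp (K * u) := Real.exp_pos _
      nlinarith [h1, h2]
  have hgt : g t ≤ g 0 := hganti (Set.self_mem_Ici) (Set.mem_Ici.2 ht) ht
  have hVt : V t ≤ Real.exp (-(2 * η / pmax) * t) * V 0 := by
    rw [hg] at hgt
    simp only [mul_zero, Real.exp_zero, one_mul] at hgt
    have h3 : Real.exp (-(2 * η / pmax) * t) = (Real.exp (K * t))⁻¹ := by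
      rw [← Real.exp_neg]
      congr 1
      rw [hK]; ring
    rw [h3, ← div_eq_inv_mul, le_div_iff₀ (Real.exp_pos _)]
    calc V t * Real.exp (K * t) = Real.exp (K * t) * V t := by ring
      _ ≤ V 0 := hgt
  -- identify V with the statement's expression
  have hVeq : ∀ u : ℝ, (∑ i : Fin m, (x i u - s u) ⬝ᵥ (fun k => p k * (x i u - s u) k)) = V u := by
    intro u
    refine Finset.sum_congr rfl fun i _ => ?_
    simp only [dotProduct, hV, he, Pi.sub_apply]
    exact Finset.sum_congr rfl fun k _ => by ring
  rw [hVeq t, hVeq 0]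
  exact hVt
end

section
/- Let m ≥ 1 and let A be a real m×m symmetric matrix with a_{ij} ≥ 0 for all i ≠ j and zero row sums. Let g : ℝ → ℝ and α > 0 satisfy (g(a) − g(b))(a − b) ≥ α(a − b)² for all a, b ∈ ℝ. Then for every u ∈ ℝᵐ, writing g(u) = (g(u₁),…,g(u_m)), one has uᵀ A g(u) ≤ α · uᵀ A u (and in particular uᵀ A g(u) ≤ 0). -/
open Matrix BigOperators

lemma key_identity (m : ℕ) (A : Matrix (Fin m) (Fin m) ℝ)
    (hsym : A.IsSymm)
    (hrow : ∀ i : Fin m, ∑ j, A i j = 0)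
    (u v : Fin m → ℝ) :
    u ⬝ᵥ A *ᵥ v = -(1/2) * ∑ i, ∑ j, A i j * (u i - u j) * (v i - v j) := by
  have hcol : ∀ j : Fin m, ∑ i, A i j = 0 := by
    intro j
    calc ∑ i, A i j = ∑ i, A j i := by
          apply Finset.sum_congr rfl
          intro i _
          exact hsym.apply j i
      _ = 0 := hrow j
  have hdot : u ⬝ᵥ A *ᵥ v = ∑ i, ∑ j, A i j * u i * v j := by
    simp only [dotProduct, mulVec, Finset.mul_sum]
    apply Finset.sum_congr rfl; intro i _
    apply Finset.sum_congr rfl; intro j _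
    ring
  have h1 : ∑ i, ∑ j, A i j * (u i * v i) = 0 := by
    simp only [← Finset.sum_mul, hrow, zero_mul, Finset.sum_const_zero]
  have h4 : ∑ i, ∑ j, A i j * (u j * v j) = 0 := by
    rw [Finset.sum_comm]
    simp only [← Finset.sum_mul, hcol, zero_mul, Finset.sum_const_zero]
  have h3 : ∑ i, ∑ j, A i j * (u j * v i) = ∑ i, ∑ j, A i j * u i * v j := by
    rw [Finset.sum_comm]
    apply Finset.sum_congr rfl; intro i _
    apply Finset.sum_congr rfl; intro j _
    rw [hsym.apply i j]
    ring
  have expand : ∑ i, ∑ j, A i j * (u i - u j) * (v i - v j)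
      = (∑ i, ∑ j, A i j * (u i * v i)) - (∑ i, ∑ j, A i j * u i * v j)
        - (∑ i, ∑ j, A i j * (u j * v i)) + (∑ i, ∑ j, A i j * (u j * v j)) := by
    simp only [← Finset.sum_sub_distrib, ← Finset.sum_add_distrib]
    apply Finset.sum_congr rfl; intro i _
    apply Finset.sum_congr rfl; intro j _
    ring
  rw [hdot, expand, h1, h4, h3]
  ring

/-- For a symmetric zero-row-sum matrix `A` with nonnegative off-diagonal entries
and an increasing function `g` with slope at least `α > 0`, one has
`uᵀ A g(u) ≤ α · uᵀ A u ≤ 0`. -/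
theorem stmt_10 (m : ℕ) (hm : 1 ≤ m) (A : Matrix (Fin m) (Fin m) ℝ)
    (hsym : A.IsSymm)
    (hoff : ∀ i j : Fin m, i ≠ j → 0 ≤ A i j)
    (hrow : ∀ i : Fin m, ∑ j, A i j = 0)
    (g : ℝ → ℝ) (α : ℝ) (hα : 0 < α)
    (hg : ∀ a b : ℝ, α * (a - b) ^ 2 ≤ (g a - g b) * (a - b))
    (u : Fin m → ℝ) :
    u ⬝ᵥ A *ᵥ (fun i => g (u i)) ≤ α * (u ⬝ᵥ A *ᵥ u) ∧
      u ⬝ᵥ A *ᵥ (fun i => g (u i)) ≤ 0 := by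
  have hgu := key_identity m A hsym hrow u (fun i => g (u i))
  have huu := key_identity m A hsym hrow u u
  -- termwise bounds
  have hterm : ∀ i j : Fin m, α * (A i j * (u i - u j) * (u i - u j))
      ≤ A i j * (u i - u j) * (g (u i) - g (u j)) := by
    intro i j
    rcases eq_or_ne i j with rfl | hij
    · simp
    · have hA := hoff i j hij
      have h := hg (u i) (u j)
      calc α * (A i j * (u i - u j) * (u i - u j))
          = A i j * (α * (u i - u j) ^ 2) := by ring
        _ ≤ A i j * ((g (u i) - g (u j)) * (u i - u j)) :=
            mul_le_mul_of_nonneg_left h hA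
        _ = A i j * (u i - u j) * (g (u i) - g (u j)) := by ring
  have hsum : α * (∑ i, ∑ j, A i j * (u i - u j) * (u i - u j))
      ≤ ∑ i, ∑ j, A i j * (u i - u j) * (g (u i) - g (u j)) := by
    rw [Finset.mul_sum]
    apply Finset.sum_le_sum
    intro i _
    rw [Finset.mul_sum]
    exact Finset.sum_le_sum fun j _ => hterm i j
  have hnn : 0 ≤ ∑ i, ∑ j, A i j * (u i - u j) * (u i - u j) := by
    apply Finset.sum_nonneg; intro i _
    apply Finset.sum_nonneg; intro j _
    rcases eq_or_ne i j with rfl | hij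
    · simp
    · have : A i j * (u i - u j) * (u i - u j) = A i j * (u i - u j) ^ 2 := by ring
      rw [this]
      exact mul_nonneg (hoff i j hij) (sq_nonneg _)
  have h1 : u ⬝ᵥ A *ᵥ (fun i => g (u i)) ≤ α * (u ⬝ᵥ A *ᵥ u) := by
    rw [hgu, huu]; nlinarith
  refine ⟨h1, le_trans h1 ?_⟩
  rw [huu]
  nlinarith
end
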